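/- Let G be a torsion-free group, M ≤ G a subgroup, and H ≤ G a malnormal subgroup. If M contains a finite-index subgroup contained in H and M is nontrivial, then M ⊆ H. -/

import Mathlib

/-- A subgroup `H` of `G` is malnormal if `gHg⁻¹ ∩ H = {1}` for all `g ∉ H`. -/
def Malnormal {G : Type*} [Group G] (H : Subgroup G) : Prop :=
  ∀ g : G, g ∉ H → ∀ x ∈ H, g * x * g⁻¹ ∈ H → x = 1

/-- A monoid is torsion-free if no nontrivial element has finite order. -/
def Monoid.IsTorsionFree (G : Type*) [Monoid G] : Prop :=
  ∀ g : G, g ≠ 1 → ¬IsOfFinOrder g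

theorem le_malnormal_of_finiteIndex_sub {G : Type*} [Group G]
    (htf : Monoid.IsTorsionFree G) (M H : Subgroup G) (hmal : Malnormal H)
    (M₀ : Subgroup G) (hM₀M : M₀ ≤ M) (hM₀H : M₀ ≤ H)
    (hfin : (M₀.subgroupOf M).index ≠ 0) (hM : M ≠ ⊥) :
    M ≤ H := by
  have hrel : M₀.relIndex M ≠ 0 := hfin
  -- get a nontrivial element of M₀
  obtain ⟨⟨m, hmM⟩, hm1'⟩ := (Subgroup.ne_bot_iff_exists_ne_one.mp hM)
  have hm1 : m ≠ 1 := by simpa [Subtype.ext_iff] using hm1'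
  obtain ⟨k, hk0, _, hkmem⟩ := Subgroup.exists_pow_mem_of_relIndex_ne_zero hrel hmM
  set x := (m : G) ^ k with hx
  have hxM₀ : x ∈ M₀ := hkmem.1
  have hx1 : x ≠ 1 := fun h =>
    htf m hm1 (isOfFinOrder_iff_pow_eq_one.mpr ⟨k, hk0, h⟩)
  intro g hgM
  by_contra hgH
  have hconj : g * x * g⁻¹ ∈ M := mul_mem (mul_mem hgM (hM₀M hxM₀)) (inv_mem hgM)
  obtain ⟨n, hn0, _, hnmem⟩ := Subgroup.exists_pow_mem_of_relIndex_ne_zero hrel hconj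
  have hpow : (g * x * g⁻¹) ^ n = g * x ^ n * g⁻¹ := by
    rw [conj_pow]
  have hxnH : x ^ n ∈ H := hM₀H (pow_mem hxM₀ n)
  have hconjH : g * x ^ n * g⁻¹ ∈ H := by
    rw [← hpow]; exact hM₀H hnmem.1
  have := hmal g hgH (x ^ n) hxnH hconjH
  exact (htf x hx1 (isOfFinOrder_iff_pow_eq_one.mpr ⟨n, hn0, this⟩)).elim
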